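/- arXiv:1208.6193 — 2 statements merged into one kernel-verified Lean document; each statement's English description precedes it below -/
import Mathlib

section
/- Let f : ℝ³ → ℝ be a C¹ function and let Π : ℝ → ℝ³ be differentiable and satisfy Π'(t) = −Π(t) × ∇f(Π(t)) − Π(t) × (Π(t) × ∇f(Π(t))) for all t. Then the Hamiltonian H(Π) = ‖Π‖²/2 is conserved, i.e., ‖Π(t)‖ is constant in t, and the entropy f is produced, i.e., t ↦ f(Π(t)) is nondecreasing, with d/dt f(Π(t)) = ‖Π(t) × ∇f(Π(t))‖² ≥ 0. -/
open Matrix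

/-- The Euclidean gradient of `f : ℝ³ → ℝ`. -/
noncomputable def euclGrad (f : (Fin 3 → ℝ) → ℝ) (x : Fin 3 → ℝ) : Fin 3 → ℝ :=
  fun i => fderiv ℝ f x (Pi.single i 1)

lemma fderiv_eq_grad_dot (f : (Fin 3 → ℝ) → ℝ) (x v : Fin 3 → ℝ) :
    fderiv ℝ f x v = euclGrad f x ⬝ᵥ v := by
  have hv : v = ∑ i : Fin 3, v i • (Pi.single i (1 : ℝ) : Fin 3 → ℝ) := by
    funext j
    simp [Pi.single_apply, Finset.sum_apply]
  rw [hv]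
  rw [map_sum]
  simp only [_root_.map_smul]
  rw [vec3_dotProduct]
  simp [euclGrad, Fin.sum_univ_three, Pi.single_apply, Finset.sum_apply, mul_comm]

/-- For the metriplectic rigid-body system
`Π' = −Π × ∇f(Π) − Π × (Π × ∇f(Π))` with `f` of class `C¹`, the Hamiltonian
`H(Π) = ‖Π‖²/2` is conserved (i.e. `Π(t)·Π(t)` is constant) and the entropy `f`
is produced: `d/dt f(Π(t)) = ‖Π × ∇f(Π)‖² ≥ 0`, so `t ↦ f(Π(t))` is
nondecreasing. -/
theorem stmt_11 (f : (Fin 3 → ℝ) → ℝ) (hf : ContDiff ℝ 1 f)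
    (P : ℝ → Fin 3 → ℝ)
    (hP : ∀ t, HasDerivAt P
      (-crossProduct (P t) (euclGrad f (P t)) -
        crossProduct (P t) (crossProduct (P t) (euclGrad f (P t)))) t) :
    (∀ t, P t ⬝ᵥ P t = P 0 ⬝ᵥ P 0) ∧
    (∀ t, HasDerivAt (fun s => f (P s))
        (crossProduct (P t) (euclGrad f (P t)) ⬝ᵥ
          crossProduct (P t) (euclGrad f (P t))) t ∧
      0 ≤ crossProduct (P t) (euclGrad f (P t)) ⬝ᵥ
          crossProduct (P t) (euclGrad f (P t))) ∧
    Monotone fun t => f (P t) := by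
  -- componentwise derivatives
  have hPi : ∀ t i, HasDerivAt (fun s => P s i)
      ((-crossProduct (P t) (euclGrad f (P t)) -
        crossProduct (P t) (crossProduct (P t) (euclGrad f (P t)))) i) t := by
    intro t i
    have := (hP t)
    exact (ContinuousLinearMap.proj i : (Fin 3 → ℝ) →L[ℝ] ℝ).hasFDerivAt.comp_hasDerivAt t this
  -- derivative of f ∘ P
  have hfP : ∀ t, HasDerivAt (fun s => f (P s))
      (crossProduct (P t) (euclGrad f (P t)) ⬝ᵥ
        crossProduct (P t) (euclGrad f (P t))) t := by
    intro t
    have hdf := (hf.differentiable one_ne_zero (P t)).hasFDerivAt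
    have h := hdf.comp_hasDerivAt t (hP t)
    have : fderiv ℝ f (P t) (-crossProduct (P t) (euclGrad f (P t)) -
        crossProduct (P t) (crossProduct (P t) (euclGrad f (P t)))) =
        crossProduct (P t) (euclGrad f (P t)) ⬝ᵥ crossProduct (P t) (euclGrad f (P t)) := by
      rw [fderiv_eq_grad_dot]
      set p := P t
      set g := euclGrad f p
      simp only [cross_apply, vec3_dotProduct]
      simp only [Pi.sub_apply, Pi.neg_apply, cons_val_zero, cons_val_one, head_cons,
        cons_val_two, tail_cons]
      ring
    rwa [this] at h
  have hnn : ∀ t, (0:ℝ) ≤ crossProduct (P t) (euclGrad f (P t)) ⬝ᵥ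
      crossProduct (P t) (euclGrad f (P t)) := by
    intro t
    rw [vec3_dotProduct]
    have h0 := mul_self_nonneg (crossProduct (P t) (euclGrad f (P t)) 0)
    have h1 := mul_self_nonneg (crossProduct (P t) (euclGrad f (P t)) 1)
    have h2 := mul_self_nonneg (crossProduct (P t) (euclGrad f (P t)) 2)
    linarith
  refine ⟨?_, fun t => ⟨hfP t, hnn t⟩, ?_⟩
  · -- conservation
    have hconst : ∀ t, HasDerivAt (fun s => P s ⬝ᵥ P s) 0 t := by
      intro t
      have h0 := hPi t 0
      have h1 := hPi t 1
      have h2 := hPi t 2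
      have hd : HasDerivAt (fun s => P s ⬝ᵥ P s)
          (2 * (P t 0 * (-crossProduct (P t) (euclGrad f (P t)) -
            crossProduct (P t) (crossProduct (P t) (euclGrad f (P t)))) 0) +
           2 * (P t 1 * (-crossProduct (P t) (euclGrad f (P t)) -
            crossProduct (P t) (crossProduct (P t) (euclGrad f (P t)))) 1) +
           2 * (P t 2 * (-crossProduct (P t) (euclGrad f (P t)) -
            crossProduct (P t) (crossProduct (P t) (euclGrad f (P t)))) 2)) t := by
        have e : ∀ s, P s ⬝ᵥ P s = P s 0 * P s 0 + P s 1 * P s 1 + P s 2 * P s 2 := by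
          intro s; rw [vec3_dotProduct]
        simp only [e]
        have := ((h0.mul h0).add (h1.mul h1)).add (h2.mul h2)
        exact this.congr_deriv (by ring)
      convert hd using 1
      set p := P t
      set g := euclGrad f p
      simp only [cross_apply, Pi.sub_apply, Pi.neg_apply, cons_val_zero, cons_val_one,
        head_cons, cons_val_two, tail_cons]
      ring
    intro t
    have : ∀ a b : ℝ, (fun s => P s ⬝ᵥ P s) a = (fun s => P s ⬝ᵥ P s) b := by
      intro a b
      exact is_const_of_deriv_eq_zero (fun x => (hconst x).differentiableAt)
        (fun x => (hconst x).deriv) a b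
    exact this t 0
  · exact monotone_of_deriv_nonneg (fun t => (hfP t).differentiableAt)
      (fun t => by rw [(hfP t).deriv]; exact hnn t)
end

section
/- Let H, S : ℝ³ → ℝ be C¹ functions and let Π : ℝ → ℝ³ be differentiable and satisfy Π'(t) = ∇S(Π(t)) × ∇H(Π(t)) − ∇H(Π(t)) × (∇H(Π(t)) × ∇S(Π(t))) for all t. Then H(Π(t)) is constant in t, and t ↦ S(Π(t)) is nondecreasing, with d/dt S(Π(t)) = ‖∇H(Π(t)) × ∇S(Π(t))‖² ≥ 0. -/
open Matrix

private lemma clm_eq_grad_dot (L : (Fin 3 → ℝ) →L[ℝ] ℝ) (v : Fin 3 → ℝ) :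
    L v = (fun i => L (Pi.single i 1)) ⬝ᵥ v := by
  have h : ∀ i : Fin 3, (fun j => if i = j then (1:ℝ) else 0) = Pi.single i 1 := by
    intro i; ext j; simp [Pi.single_apply, eq_comm]
  conv_lhs => rw [pi_eq_sum_univ v]
  rw [map_sum]
  simp only [dotProduct]
  refine Finset.sum_congr rfl fun i _ => ?_
  rw [L.map_smul, smul_eq_mul, mul_comm, h]

private lemma key1 (a b : Fin 3 → ℝ) :
    a ⬝ᵥ (crossProduct b a - crossProduct a (crossProduct a b)) = 0 := by
  simp [crossProduct, dotProduct, Fin.sum_univ_three]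
  ring

private lemma key2 (a b : Fin 3 → ℝ) :
    b ⬝ᵥ (crossProduct b a - crossProduct a (crossProduct a b)) =
      (crossProduct a b) ⬝ᵥ (crossProduct a b) := by
  simp [crossProduct, dotProduct, Fin.sum_univ_three]
  ring

private lemma dot_self_nonneg' (v : Fin 3 → ℝ) : 0 ≤ v ⬝ᵥ v :=
  Finset.sum_nonneg fun i _ => mul_self_nonneg (v i)

/-- For the metriplectic system on `ℝ³`
`Π' = ∇S(Π) × ∇H(Π) − ∇H(Π) × (∇H(Π) × ∇S(Π))` with `H, S` of class `C¹`,
the Hamiltonian `H` is conserved along solutions, and the entropy `S` is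
produced: `d/dt S(Π(t)) = ‖∇H × ∇S‖² ≥ 0`, so `t ↦ S(Π(t))` is nondecreasing. -/
theorem stmt_12 (H S : (Fin 3 → ℝ) → ℝ)
    (hH : ContDiff ℝ 1 H) (hS : ContDiff ℝ 1 S)
    (P : ℝ → Fin 3 → ℝ)
    (hP : ∀ t, HasDerivAt P
      (crossProduct (euclGrad S (P t)) (euclGrad H (P t)) -
        crossProduct (euclGrad H (P t))
          (crossProduct (euclGrad H (P t)) (euclGrad S (P t)))) t) :
    (∀ t, H (P t) = H (P 0)) ∧
    (∀ t, HasDerivAt (fun s => S (P s))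
        (crossProduct (euclGrad H (P t)) (euclGrad S (P t)) ⬝ᵥ
          crossProduct (euclGrad H (P t)) (euclGrad S (P t))) t ∧
      0 ≤ crossProduct (euclGrad H (P t)) (euclGrad S (P t)) ⬝ᵥ
          crossProduct (euclGrad H (P t)) (euclGrad S (P t))) ∧
    Monotone fun t => S (P t) := by
  set v : ℝ → Fin 3 → ℝ := fun t =>
    crossProduct (euclGrad S (P t)) (euclGrad H (P t)) -
      crossProduct (euclGrad H (P t))
        (crossProduct (euclGrad H (P t)) (euclGrad S (P t))) with hv
  have hchain : ∀ (f : (Fin 3 → ℝ) → ℝ), ContDiff ℝ 1 f → ∀ t,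
      HasDerivAt (fun s => f (P s)) (euclGrad f (P t) ⬝ᵥ v t) t := by
    intro f hf t
    have hfd : HasFDerivAt f (fderiv ℝ f (P t)) (P t) :=
      (hf.differentiable one_ne_zero).differentiableAt.hasFDerivAt
    have := hfd.comp_hasDerivAt t (hP t)
    have heq : fderiv ℝ f (P t) (v t) = euclGrad f (P t) ⬝ᵥ v t :=
      clm_eq_grad_dot _ _
    rw [heq] at this
    exact this
  have hHd : ∀ t, HasDerivAt (fun s => H (P s)) 0 t := by
    intro t
    have := hchain H hH t
    rwa [hv, key1] at this
  have hSd : ∀ t, HasDerivAt (fun s => S (P s))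
      (crossProduct (euclGrad H (P t)) (euclGrad S (P t)) ⬝ᵥ
        crossProduct (euclGrad H (P t)) (euclGrad S (P t))) t := by
    intro t
    have := hchain S hS t
    rwa [hv, key2] at this
  refine ⟨?_, fun t => ⟨hSd t, dot_self_nonneg' _⟩, ?_⟩
  · intro t
    exact is_const_of_deriv_eq_zero (fun s => (hHd s).differentiableAt)
      (fun s => (hHd s).deriv) t 0
  · exact monotone_of_deriv_nonneg (fun t => (hSd t).differentiableAt)
      (fun t => (hSd t).deriv ▸ dot_self_nonneg' _)
end
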